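/- Let P > 0 and Q, R ≥ 0, let σ : [0,∞) → [0,∞) be integrable, and let y : [0,∞) → ℝ be a positive Lipschitz function with y(0) = 1 whose derivative satisfies, for almost every t > 0, y'(t) ≤ −σ(t) y(t)² / √(P y(t)² + Q y(t) + R²). Set Σ(t) = ∫₀^t σ(s) ds. Then for every t > 0 with Σ(t) > 0: y(t) ≤ exp(−Σ(t)/(2√P)) + 36Q/Σ(t)² + 6R/Σ(t). -/

import Mathlib

open Real MeasureTheory Filter Set Topology

lemma lip_deriv_bound {f : ℝ → ℝ} {K : NNReal} (hf : LipschitzWith K f) (s : ℝ) :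
    |deriv f s| ≤ K := by
  by_cases h : DifferentiableAt ℝ f s
  · have hd := h.hasDerivAt
    rw [hasDerivAt_iff_tendsto_slope] at hd
    have : ∀ z ∈ ({s}ᶜ : Set ℝ), |slope f s z| ≤ K := by
      intro z hz
      rw [slope_def_field]
      rw [abs_div]
      rw [div_le_iff₀ (by simpa [abs_pos, sub_ne_zero] using hz)]
      have := hf.dist_le_mul z s
      simpa [Real.dist_eq, abs_sub_comm] using this
    have hev : ∀ᶠ z in 𝓝[≠] s, |slope f s z| ≤ K :=
      eventually_nhdsWithin_of_forall this
    have : Tendsto (fun z => |slope f s z|) (𝓝[≠] s) (𝓝 |deriv f s|) :=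
      (continuous_abs.tendsto _).comp hd
    exact le_of_tendsto this hev
  · simp [deriv_zero_of_not_differentiableAt h]

lemma lipschitz_integral_deriv {f : ℝ → ℝ} {K : NNReal} (hf : LipschitzWith K f)
    {a b : ℝ} (hab : a ≤ b) : (∫ s in a..b, deriv f s) = f b - f a := by
  have hfc : Continuous f := hf.continuous
  set u : ℕ → ℝ := fun n => ((n : ℝ) + 1)⁻¹ with hu_def
  have hu : ∀ n, 0 < u n := fun n => by positivity
  have hu0 : Tendsto u atTop (𝓝 0) := by
    simpa [hu_def] using tendsto_one_div_add_atTop_nhds_zero_nat (𝕜 := ℝ)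
  set g : ℕ → ℝ → ℝ := fun n s => (f (s + u n) - f s) / u n with hg_def
  have hgslope : ∀ n s, g n s = slope f s (s + u n) := by
    intro n s; rw [slope_def_field]; simp only [hg_def]; ring_nf
  have hgcont : ∀ n, Continuous (g n) := by
    intro n
    exact ((hfc.comp (continuous_id.add continuous_const)).sub hfc).div_const _
  have hgbound : ∀ n s, |g n s| ≤ K := by
    intro n s
    rw [hg_def]
    rw [abs_div, abs_of_pos (hu n), div_le_iff₀ (hu n)]
    have := hf.dist_le_mul (s + u n) s
    simpa [Real.dist_eq, abs_of_pos (hu n)] using this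
  -- sequence tends within punctured nbhd
  have hseq : ∀ s : ℝ, Tendsto (fun n => s + u n) atTop (𝓝[≠] s) := by
    intro s
    apply tendsto_nhdsWithin_of_tendsto_nhds_of_eventually_within
    · simpa using tendsto_const_nhds.add hu0
    · filter_upwards with n
      simp [(hu n).ne']
  have hglim : ∀ s : ℝ, DifferentiableAt ℝ f s →
      Tendsto (fun n => g n s) atTop (𝓝 (deriv f s)) := by
    intro s hs
    have hd := hs.hasDerivAt
    rw [hasDerivAt_iff_tendsto_slope] at hd
    exact (hd.comp (hseq s)).congr fun n => (hgslope n s).symm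
  -- dominated convergence on Ioc a b
  set μ := volume.restrict (Set.Ioc a b) with hμ
  have hmono : Tendsto (fun n => ∫ s, g n s ∂μ) atTop (𝓝 (∫ s, deriv f s ∂μ)) := by
    apply tendsto_integral_of_dominated_convergence (fun _ => (K : ℝ))
    · intro n; exact (hgcont n).aestronglyMeasurable
    · exact integrable_const _
    · intro n; filter_upwards with s; rw [Real.norm_eq_abs]; exact hgbound n s
    · have := hf.ae_differentiableAt (μ := volume)
      have h2 : ∀ᵐ s ∂μ, DifferentiableAt ℝ f s := ae_restrict_of_ae this
      filter_upwards [h2] with s hs using hglim s hs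
  -- compute integral of g n
  set F : ℝ → ℝ := fun x => ∫ s in a..x, f s with hF_def
  have hFderiv : ∀ x : ℝ, HasDerivAt F (f x) x := by
    intro x
    exact intervalIntegral.integral_hasDerivAt_right (hfc.intervalIntegrable _ _)
      (hfc.stronglyMeasurableAtFilter _ _) hfc.continuousAt
  have hint : ∀ c d : ℝ, IntervalIntegrable f volume c d := fun c d => hfc.intervalIntegrable _ _
  have hgint : ∀ n, (∫ s, g n s ∂μ) = slope F b (b + u n) - slope F a (a + u n) := by
    intro n
    have h1 : (∫ s, g n s ∂μ) = ∫ s in a..b, g n s := by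
      rw [intervalIntegral.integral_of_le hab]
    rw [h1, hg_def]
    simp only
    rw [intervalIntegral.integral_div]
    have hc2 : Continuous fun x : ℝ => f (x + u n) := hfc.comp (continuous_id.add continuous_const)
    rw [intervalIntegral.integral_sub (hc2.intervalIntegrable _ _) (hint a b)]
    rw [intervalIntegral.integral_comp_add_right (fun s => f s) (u n)]
    have e1 : (∫ s in (a + u n)..(b + u n), f s)
        = F (b + u n) - F (a + u n) := by
      rw [hF_def]
      simp only
      rw [← intervalIntegral.integral_add_adjacent_intervals (hint a (a + u n)) (hint (a + u n) (b + u n))]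
      ring
    have e2 : (∫ s in a..b, f s) = F b - F a := by
      rw [hF_def]; simp [intervalIntegral.integral_same]
    rw [e1, e2, slope_def_field, slope_def_field]
    have hun := (hu n).ne'
    rw [show b + u n - b = u n by ring, show a + u n - a = u n by ring]
    ring
  have hlim2 : Tendsto (fun n => ∫ s, g n s ∂μ) atTop (𝓝 (f b - f a)) := by
    have hb : Tendsto (fun n => slope F b (b + u n)) atTop (𝓝 (f b)) := by
      have hd := (hFderiv b); rw [hasDerivAt_iff_tendsto_slope] at hd
      exact hd.comp (hseq b)
    have ha : Tendsto (fun n => slope F a (a + u n)) atTop (𝓝 (f a)) := by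
      have hd := (hFderiv a); rw [hasDerivAt_iff_tendsto_slope] at hd
      exact hd.comp (hseq a)
    have := hb.sub ha
    apply this.congr'
    filter_upwards with n using (hgint n).symm
  have := tendsto_nhds_unique hmono hlim2
  rw [intervalIntegral.integral_of_le hab]
  exact this

lemma integral_le_sub_of_ae_le_deriv {f φ : ℝ → ℝ} {K : NNReal} (hf : LipschitzWith K f)
    {a b : ℝ} (hab : a ≤ b) (hφ : IntegrableOn φ (Set.Ioc a b))
    (hle : ∀ᵐ s ∂(volume.restrict (Set.Ioo a b)), φ s ≤ deriv f s) :
    (∫ s in a..b, φ s) ≤ f b - f a := by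
  rw [← lipschitz_integral_deriv hf hab]
  have hder_int : IntervalIntegrable (deriv f) volume a b := by
    rw [intervalIntegrable_iff_integrableOn_Ioc_of_le hab]
    apply Integrable.mono' (integrable_const (K : ℝ))
    · exact ((measurable_deriv f).aestronglyMeasurable)
    · filter_upwards with s; rw [Real.norm_eq_abs]; exact lip_deriv_bound hf s
  have hφint : IntervalIntegrable φ volume a b :=
    (intervalIntegrable_iff_integrableOn_Ioc_of_le hab).2 hφ
  apply intervalIntegral.integral_mono_ae_restrict hab hφint hder_int
  have : volume.restrict (Set.Ioo a b) = volume.restrict (Set.Icc a b) :=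
    Measure.restrict_congr_set Ioo_ae_eq_Icc
  rw [← this]
  exact hle

lemma G_hasDeriv (P Q R : ℝ) {u : ℝ} (hu : 0 < u) :
    HasDerivAt (fun v => -Real.sqrt P * Real.log v + 2 * Real.sqrt Q * (Real.sqrt v)⁻¹ + R * v⁻¹)
      (-(Real.sqrt P / u + Real.sqrt Q / (u * Real.sqrt u) + R / u ^ 2)) u := by
  have hsq : 0 < Real.sqrt u := Real.sqrt_pos.2 hu
  have h1 := (Real.hasDerivAt_log hu.ne').const_mul (-Real.sqrt P)
  have h2 := ((Real.hasDerivAt_sqrt hu.ne').inv hsq.ne').const_mul (2 * Real.sqrt Q)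
  have h3 := (hasDerivAt_inv hu.ne').const_mul R
  have := (h1.add h2).add h3
  refine this.congr_deriv ?_
  have hsv : Real.sqrt u * Real.sqrt u = u := Real.mul_self_sqrt hu.le
  field_simp
  ring_nf
  linear_combination (u * Real.sqrt Q) * Real.sq_sqrt hu.le

set_option maxHeartbeats 2000000

/-- Lemma B.2: decay estimate for a positive Lipschitz function satisfying the
differential inequality `y' ≤ −σ y² / √(P y² + Q y + R²)` almost everywhere. -/
theorem differential_inequality_decay
    (P Q R : ℝ) (hP : 0 < P) (hQ : 0 ≤ Q) (hR : 0 ≤ R)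
    (σ : ℝ → ℝ) (hσnn : ∀ t, 0 ≤ σ t)
    (hσint : IntegrableOn σ (Set.Ici 0))
    (K : NNReal) (y : ℝ → ℝ)
    (hylip : LipschitzOnWith K y (Set.Ici 0))
    (hypos : ∀ t ∈ Set.Ici (0 : ℝ), 0 < y t)
    (hy0 : y 0 = 1)
    (hode : ∀ᵐ t ∂(volume.restrict (Set.Ioi (0 : ℝ))),
      ∀ d : ℝ, HasDerivAt y d t →
        d ≤ -(σ t * y t ^ 2) / Real.sqrt (P * y t ^ 2 + Q * y t + R ^ 2))
    (Sig : ℝ → ℝ) (hSig : ∀ t, Sig t = ∫ s in (0:ℝ)..t, σ s) :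
    ∀ t : ℝ, 0 < t → 0 < Sig t →
      y t ≤ Real.exp (-Sig t / (2 * Real.sqrt P)) + 36 * Q / Sig t ^ 2 + 6 * R / Sig t := by
  intro t ht hSt
  by_contra hcon
  push_neg at hcon
  have hsqP : 0 < Real.sqrt P := Real.sqrt_pos.2 hP
  -- minimum of y on [0, t]
  have hIcc : Set.Icc (0:ℝ) t ⊆ Set.Ici 0 := fun s hs => hs.1
  have hycont : ContinuousOn y (Set.Icc 0 t) := hylip.continuousOn.mono hIcc
  obtain ⟨s₀, hs₀, hmin⟩ := isCompact_Icc.exists_isMinOn (Set.nonempty_Icc.2 ht.le) hycont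
  have hm : 0 < y s₀ := hypos s₀ (hIcc hs₀)
  set c : ℝ := y s₀ / 2 with hc_def
  have hc : 0 < c := by positivity
  have hyc : ∀ s ∈ Set.Icc (0:ℝ) t, c < y s := by
    intro s hs
    have := hmin hs
    simp only [hc_def]
    have h' : y s₀ ≤ y s := this
    linarith
  -- Lipschitz extension of y
  obtain ⟨Y, hYlip, hYeq⟩ := hylip.extend_real
  -- the function G and its derivative G'
  set G : ℝ → ℝ := fun v => -Real.sqrt P * Real.log v + 2 * Real.sqrt Q * (Real.sqrt v)⁻¹ + R * v⁻¹
    with hG_def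
  set G' : ℝ → ℝ := fun v => -(Real.sqrt P / v + Real.sqrt Q / (v * Real.sqrt v) + R / v ^ 2)
    with hG'_def
  have hGd : ∀ v : ℝ, 0 < v → HasDerivAt G (G' v) v := fun v hv => G_hasDeriv P Q R hv
  -- Lipschitz constant for G on [c, ∞)
  set Cg : ℝ := Real.sqrt P / c + Real.sqrt Q / (c * Real.sqrt c) + R / c ^ 2 with hCg_def
  have hCg0 : 0 ≤ Cg := by positivity
  have hG'bound : ∀ v ∈ Set.Ici c, ‖G' v‖₊ ≤ Cg.toNNReal := by
    intro v hv
    have hvc : c ≤ v := hv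
    have hv0 : 0 < v := lt_of_lt_of_le hc hvc
    rw [← NNReal.coe_le_coe, coe_nnnorm, Real.coe_toNNReal _ hCg0, Real.norm_eq_abs,
      hG'_def]
    rw [abs_neg, abs_of_nonneg (by positivity)]
    rw [hCg_def]
    have hsc : Real.sqrt c ≤ Real.sqrt v := Real.sqrt_le_sqrt hvc
    have hsc0 : 0 < Real.sqrt c := Real.sqrt_pos.2 hc
    gcongr <;> positivity
  have hGlip : LipschitzOnWith Cg.toNNReal G (Set.Ici c) :=
    (convex_Ici c).lipschitzOnWith_of_nnnorm_hasDerivWithin_le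
      (fun v hv => (hGd v (lt_of_lt_of_le hc hv)).hasDerivWithinAt) hG'bound
  -- the truncated composition
  set Ghat : ℝ → ℝ := fun v => G (max v c) with hGhat_def
  have hGhatlip : LipschitzWith Cg.toNNReal Ghat := by
    apply LipschitzWith.of_dist_le_mul
    intro x y'
    have h1 : dist (Ghat x) (Ghat y') ≤ Cg.toNNReal * dist (max x c) (max y' c) :=
      hGlip.dist_le_mul _ (Set.mem_Ici.2 (le_max_right _ _)) _ (Set.mem_Ici.2 (le_max_right _ _))
    have h2 : dist (max x c) (max y' c) ≤ dist x y' := by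
      rw [Real.dist_eq, Real.dist_eq]
      exact abs_max_sub_max_le_abs _ _ _
    calc dist (Ghat x) (Ghat y') ≤ Cg.toNNReal * dist (max x c) (max y' c) := h1
      _ ≤ Cg.toNNReal * dist x y' := by
          exact mul_le_mul_of_nonneg_left h2 (NNReal.coe_nonneg _)
  set F : ℝ → ℝ := fun s => Ghat (Y s) with hF_def
  have hFlip : LipschitzWith (Cg.toNNReal * K) F := hGhatlip.comp hYlip
  -- the a.e. derivative bound for F
  have hae : ∀ᵐ s ∂(volume.restrict (Set.Ioo 0 t)), σ s ≤ deriv F s := by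
    have h1 : ∀ᵐ s ∂(volume.restrict (Set.Ioo (0:ℝ) t)), ∀ d : ℝ, HasDerivAt y d s →
        d ≤ -(σ s * y s ^ 2) / Real.sqrt (P * y s ^ 2 + Q * y s + R ^ 2) :=
      ae_restrict_of_ae_restrict_of_subset Set.Ioo_subset_Ioi_self hode
    have h2 : ∀ᵐ s ∂(volume.restrict (Set.Ioo (0:ℝ) t)), DifferentiableAt ℝ Y s :=
      ae_restrict_of_ae hYlip.ae_differentiableAt
    have h3 : ∀ᵐ s ∂(volume.restrict (Set.Ioo (0:ℝ) t)), s ∈ Set.Ioo (0:ℝ) t :=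
      ae_restrict_mem measurableSet_Ioo
    filter_upwards [h1, h2, h3] with s hs1 hs2 hs3
    have hs0 : (0:ℝ) < s := hs3.1
    have hsIci : s ∈ Set.Ici (0:ℝ) := hs0.le
    have hv : 0 < y s := hypos s hsIci
    have hvc : c < y s := hyc s ⟨hs0.le, hs3.2.le⟩
    have hYs : Y s = y s := (hYeq hsIci).symm
    have hnhds : Set.Ici (0:ℝ) ∈ 𝓝 s :=
      mem_of_superset (isOpen_Ioi.mem_nhds hs0) Set.Ioi_subset_Ici_self
    have hyY : y =ᶠ[𝓝 s] Y := eventually_of_mem hnhds fun x hx => hYeq hx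
    have hYd : HasDerivAt Y (deriv Y s) s := hs2.hasDerivAt
    have hyd : HasDerivAt y (deriv Y s) s := hYd.congr_of_eventuallyEq hyY
    have hdle := hs1 (deriv Y s) hyd
    have hGhd : HasDerivAt Ghat (G' (y s)) (Y s) := by
      rw [hYs]
      apply (hGd (y s) hv).congr_of_eventuallyEq
      apply eventually_of_mem (isOpen_Ioi.mem_nhds hvc)
      intro x hx
      simp only [hGhat_def]
      rw [max_eq_left (le_of_lt hx)]
    have hFd : HasDerivAt F (G' (y s) * deriv Y s) s := hGhd.comp s hYd
    rw [hFd.deriv]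
    -- numeric estimate
    set v := y s
    set d := deriv Y s
    set S₀ := Real.sqrt (P * v ^ 2 + Q * v + R ^ 2) with hS₀_def
    have hS₀ : 0 < S₀ := Real.sqrt_pos.2 (by positivity)
    have hsv : Real.sqrt v * Real.sqrt v = v := Real.mul_self_sqrt hv.le
    have hsvne : Real.sqrt v ≠ 0 := (Real.sqrt_pos.2 hv).ne'
    have key1 : S₀ ≤ Real.sqrt P * v + Real.sqrt Q * Real.sqrt v + R := by
      have h0 : 0 ≤ Real.sqrt P * v + Real.sqrt Q * Real.sqrt v + R := by positivity
      have hle : P * v ^ 2 + Q * v + R ^ 2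
          ≤ (Real.sqrt P * v + Real.sqrt Q * Real.sqrt v + R) ^ 2 := by
        have hPP : Real.sqrt P * Real.sqrt P = P := Real.mul_self_sqrt hP.le
        have hQQ : Real.sqrt Q * Real.sqrt Q = Q := Real.mul_self_sqrt hQ
        nlinarith [mul_nonneg (mul_nonneg (Real.sqrt_nonneg P) hv.le)
            (mul_nonneg (Real.sqrt_nonneg Q) (Real.sqrt_nonneg v)),
          mul_nonneg (mul_nonneg (Real.sqrt_nonneg P) hv.le) hR,
          mul_nonneg (mul_nonneg (Real.sqrt_nonneg Q) (Real.sqrt_nonneg v)) hR]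
      calc S₀ ≤ Real.sqrt ((Real.sqrt P * v + Real.sqrt Q * Real.sqrt v + R) ^ 2) :=
            Real.sqrt_le_sqrt hle
        _ = _ := Real.sqrt_sq h0
    have hG'val : G' v * v ^ 2 = -(Real.sqrt P * v + Real.sqrt Q * Real.sqrt v + R) := by
      have hsv2 : Real.sqrt v ^ 2 = v := Real.sq_sqrt hv.le
      simp only [hG'_def]
      field_simp
      ring_nf
      linear_combination (Real.sqrt Q) * hsv2
    have hG'neg : G' v < 0 := by
      have hv2 : (0:ℝ) < v ^ 2 := by positivity
      have hE : 0 < Real.sqrt P * v + Real.sqrt Q * Real.sqrt v + R := by positivity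
      nlinarith [hG'val]
    have step1 : G' v * (-(σ s * v ^ 2) / S₀) ≤ G' v * d :=
      mul_le_mul_of_nonpos_left hdle hG'neg.le
    have step2 : σ s ≤ G' v * (-(σ s * v ^ 2) / S₀) := by
      have e : G' v * (-(σ s * v ^ 2) / S₀)
          = σ s * ((Real.sqrt P * v + Real.sqrt Q * Real.sqrt v + R) / S₀) := by
        calc G' v * (-(σ s * v ^ 2) / S₀) = (-(σ s) / S₀) * (G' v * v ^ 2) := by ring
          _ = σ s * ((Real.sqrt P * v + Real.sqrt Q * Real.sqrt v + R) / S₀) := by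
              rw [hG'val]; ring
      rw [e]
      have hone : (1:ℝ) ≤ (Real.sqrt P * v + Real.sqrt Q * Real.sqrt v + R) / S₀ :=
        (one_le_div hS₀).2 key1
      exact le_mul_of_one_le_right (hσnn s) hone
    exact le_trans step2 step1
  -- apply the integral inequality
  have hσIoc : IntegrableOn σ (Set.Ioc 0 t) :=
    hσint.mono_set fun x hx => le_of_lt hx.1
  have hkey := integral_le_sub_of_ae_le_deriv hFlip ht.le hσIoc hae
  -- identify F t and F 0
  have hyt_mem : t ∈ Set.Icc (0:ℝ) t := ⟨ht.le, le_refl t⟩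
  have hFT : F t = G (y t) := by
    simp only [hF_def, hGhat_def]
    rw [(hYeq ht.le).symm, max_eq_left (hyc t hyt_mem).le]
  have hy0c : c < (1:ℝ) := by
    have := hyc 0 ⟨le_refl 0, ht.le⟩
    rwa [hy0] at this
  have hF0 : F 0 = G 1 := by
    simp only [hF_def, hGhat_def]
    rw [(hYeq (le_refl (0:ℝ))).symm, hy0, max_eq_left hy0c.le]
  have hG1 : (0:ℝ) ≤ G 1 := by
    simp only [hG_def]
    rw [Real.log_one, Real.sqrt_one]
    simp
    positivity
  have hSle : Sig t ≤ G (y t) := by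
    rw [hSig t]
    calc (∫ s in (0:ℝ)..t, σ s) ≤ F t - F 0 := hkey
      _ = G (y t) - G 1 := by rw [hFT, hF0]
      _ ≤ G (y t) := by linarith
  -- the final contradiction
  set w := y t with hw_def
  have hw0 : 0 < w := hypos t ht.le
  set SS := Sig t with hSS_def
  have hsw : Real.sqrt w * Real.sqrt w = w := Real.mul_self_sqrt hw0.le
  have hswne : Real.sqrt w ≠ 0 := (Real.sqrt_pos.2 hw0).ne'
  have hBnn : 0 ≤ 36 * Q / SS ^ 2 := by positivity
  have hCnn : 0 ≤ 6 * R / SS := by positivity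
  have hAp : 0 < Real.exp (-SS / (2 * Real.sqrt P)) := Real.exp_pos _
  have hA : Real.exp (-SS / (2 * Real.sqrt P)) < w := by linarith
  have h1 : -Real.sqrt P * Real.log w < SS / 2 := by
    have hlog : -SS / (2 * Real.sqrt P) < Real.log w := by
      have := Real.log_lt_log hAp hA
      rwa [Real.log_exp] at this
    have h2 : -Real.sqrt P * Real.log w < -Real.sqrt P * (-SS / (2 * Real.sqrt P)) :=
      mul_lt_mul_of_neg_left hlog (neg_lt_zero.2 hsqP)
    have h3 : -Real.sqrt P * (-SS / (2 * Real.sqrt P)) = SS / 2 := by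
      field_simp
    linarith
  have h2 : 2 * Real.sqrt Q * (Real.sqrt w)⁻¹ ≤ SS / 3 := by
    have hBw : 36 * Q / SS ^ 2 < w := by linarith
    have hQle : Q ≤ w * SS ^ 2 / 36 := by
      rw [div_lt_iff₀ (by positivity)] at hBw
      nlinarith
    have hs1 : Real.sqrt Q ≤ Real.sqrt w * SS / 6 := by
      have : Real.sqrt Q ≤ Real.sqrt (w * SS ^ 2 / 36) := Real.sqrt_le_sqrt hQle
      have he : Real.sqrt (w * SS ^ 2 / 36) = Real.sqrt w * SS / 6 := by
        rw [show w * SS ^ 2 / 36 = (Real.sqrt w * SS / 6) ^ 2 by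
          rw [div_pow, mul_pow, Real.sq_sqrt hw0.le]; norm_num]
        exact Real.sqrt_sq (by positivity)
      linarith [he ▸ this]
    have hsw0 : 0 < Real.sqrt w := Real.sqrt_pos.2 hw0
    have e : 2 * (Real.sqrt w * SS / 6) * (Real.sqrt w)⁻¹ = SS / 3 := by
      field_simp
      ring
    calc 2 * Real.sqrt Q * (Real.sqrt w)⁻¹
        ≤ 2 * (Real.sqrt w * SS / 6) * (Real.sqrt w)⁻¹ := by gcongr
      _ = SS / 3 := e
  have h3 : R * w⁻¹ ≤ SS / 6 := by
    have hCw : 6 * R / SS < w := by linarith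
    have : R ≤ w * SS / 6 := by
      rw [div_lt_iff₀ hSt] at hCw
      nlinarith
    rw [mul_inv_le_iff₀ hw0]
    linarith [this]
  have hfin : SS ≤ -Real.sqrt P * Real.log w + 2 * Real.sqrt Q * (Real.sqrt w)⁻¹ + R * w⁻¹ := by
    simp only [hG_def] at hSle
    exact hSle
  linarith only [hfin, h1, h2, h3]
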